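/- (1) If x and y are numbers, then the Conway product x·y is a number. (2) If x₁, x₂, y are numbers with x₁ ≈ x₂, then x₁·y ≈ x₂·y. -/

import Mathlib

/-! `SetTheory.PGame` has been removed from Mathlib; it is re-defined here with its old meaning. -/
universe u

noncomputable section

namespace SetTheory

inductive PGame : Type (u + 1)
  | mk : ∀ α β : Type u, (α → PGame) → (β → PGame) → PGame

namespace PGame

def leAux (x : PGame.{u}) : PGame.{u} → Prop × Prop := by
  induction x with | mk xl xr _ _ IHxl IHxr => ?_
  intro y
  induction y with | mk yl yr yL yR IHyl IHyr => ?_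
  exact ((∀ i, ¬ (IHxl i (mk yl yr yL yR)).2) ∧ (∀ j, ¬ (IHyr j).2),
    (∀ j, ¬ (IHyl j).1) ∧ (∀ i, ¬ (IHxr i (mk yl yr yL yR)).1))

instance : LE PGame.{u} := ⟨fun x y => (leAux x y).1⟩

instance : LT PGame.{u} := ⟨fun x y => x ≤ y ∧ ¬ y ≤ x⟩

def Equiv (x y : PGame.{u}) : Prop := x ≤ y ∧ y ≤ x

instance : HasEquiv PGame.{u} := ⟨Equiv⟩

def neg : PGame.{u} → PGame.{u}
  | mk l r L R => mk r l (fun i => neg (R i)) (fun i => neg (L i))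

instance : Neg PGame.{u} := ⟨neg⟩

def add (x : PGame.{u}) : PGame.{u} → PGame.{u} := by
  induction x with | mk xl xr _ _ IHxl IHxr => ?_
  intro y
  induction y with | mk yl yr yL yR IHyl IHyr => ?_
  exact mk (xl ⊕ yl) (xr ⊕ yr) (Sum.rec (fun i => IHxl i (mk yl yr yL yR)) IHyl)
    (Sum.rec (fun i => IHxr i (mk yl yr yL yR)) IHyr)

instance : Add PGame.{u} := ⟨add⟩

instance : Sub PGame.{u} := ⟨fun x y => x + -y⟩

def mul (x : PGame.{u}) : PGame.{u} → PGame.{u} := by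
  induction x with | mk xl xr _ _ IHxl IHxr => ?_
  intro y
  induction y with | mk yl yr yL yR IHyl IHyr => ?_
  exact mk ((xl × yl) ⊕ (xr × yr)) ((xl × yr) ⊕ (xr × yl))
    (Sum.rec (fun p => IHxl p.1 (mk yl yr yL yR) + IHyl p.2 - IHxl p.1 (yL p.2))
      (fun p => IHxr p.1 (mk yl yr yL yR) + IHyr p.2 - IHxr p.1 (yR p.2)))
    (Sum.rec (fun p => IHxl p.1 (mk yl yr yL yR) + IHyr p.2 - IHxl p.1 (yR p.2))
      (fun p => IHxr p.1 (mk yl yr yL yR) + IHyl p.2 - IHxr p.1 (yL p.2)))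

instance : Mul PGame.{u} := ⟨mul⟩

def Numeric : PGame.{u} → Prop
  | mk _ _ L R => (∀ i j, L i < R j) ∧ (∀ i, Numeric (L i)) ∧ ∀ j, Numeric (R j)

end PGame

end SetTheory

end

open SetTheory PGame

namespace PGX

noncomputable section

def LM : PGame.{u} → Type u
  | mk l _ _ _ => l

def RM : PGame.{u} → Type u
  | mk _ r _ _ => r

def mL : (x : PGame.{u}) → LM x → PGame.{u}
  | mk _ _ L _ => L

def mR : (x : PGame.{u}) → RM x → PGame.{u}
  | mk _ _ _ R => R

theorem leAux_mk (xl xr : Type u) (xL : xl → PGame.{u}) (xR : xr → PGame.{u})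
    (yl yr : Type u) (yL : yl → PGame.{u}) (yR : yr → PGame.{u}) :
    leAux (mk xl xr xL xR) (mk yl yr yL yR) =
      ((∀ i, ¬ (leAux (xL i) (mk yl yr yL yR)).2) ∧ (∀ j, ¬ (leAux (mk xl xr xL xR) (yR j)).2),
        (∀ j, ¬ (leAux (mk xl xr xL xR) (yL j)).1) ∧ (∀ i, ¬ (leAux (xR i) (mk yl yr yL yR)).1)) :=
  rfl

theorem leAux_swap : ∀ x y : PGame.{u},
    ((leAux x y).2 ↔ (leAux y x).1) ∧ ((leAux y x).2 ↔ (leAux x y).1) := by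
  intro x
  induction x with | mk xl xr xL xR IHxl IHxr => ?_
  intro y
  induction y with | mk yl yr yL yR IHyl IHyr => ?_
  rw [leAux_mk, leAux_mk]
  dsimp only
  exact ⟨and_congr (forall_congr' fun j => not_congr (IHyl j).2.symm)
      (forall_congr' fun i => not_congr (IHxr i _).2.symm),
    and_congr (forall_congr' fun i => not_congr (IHxl i _).1.symm)
      (forall_congr' fun j => not_congr (IHyr j).1.symm)⟩

theorem p_le_mk {xl xr : Type u} {xL : xl → PGame.{u}} {xR : xr → PGame.{u}}
    {yl yr : Type u} {yL : yl → PGame.{u}} {yR : yr → PGame.{u}} :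
    mk xl xr xL xR ≤ mk yl yr yL yR ↔
      (∀ i, ¬ mk yl yr yL yR ≤ xL i) ∧ (∀ j, ¬ yR j ≤ mk xl xr xL xR) := by
  show (leAux _ _).1 ↔ _
  rw [leAux_mk]
  dsimp only
  exact and_congr (forall_congr' fun i => not_congr (leAux_swap _ _).1)
    (forall_congr' fun j => not_congr (leAux_swap _ _).1)

theorem p_le_iff {x y : PGame.{u}} :
    x ≤ y ↔ (∀ i, ¬ y ≤ mL x i) ∧ (∀ j, ¬ mR y j ≤ x) := by
  cases x; cases y; exact p_le_mk

theorem p_le_refl : ∀ x : PGame.{u}, x ≤ x := by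
  intro x
  induction x with | mk xl xr xL xR IHl IHr => ?_
  rw [p_le_mk]
  exact ⟨fun i h => (p_le_iff.1 h).1 i (IHl i), fun j h => (p_le_iff.1 h).2 j (IHr j)⟩

theorem p_not_le_mL (x : PGame.{u}) (i : LM x) : ¬ x ≤ mL x i :=
  fun h => (p_le_iff.1 h).1 i (p_le_refl _)

theorem p_not_mR_le (x : PGame.{u}) (j : RM x) : ¬ mR x j ≤ x :=
  fun h => (p_le_iff.1 h).2 j (p_le_refl _)

theorem le_trans_aux : ∀ x y z : PGame.{u},
    (x ≤ y → y ≤ z → x ≤ z) ∧ (y ≤ z → z ≤ x → y ≤ x) ∧ (z ≤ x → x ≤ y → z ≤ y) := by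
  intro x
  induction x with | mk xl xr xL xR IHxl IHxr => ?_
  intro y
  induction y with | mk yl yr yL yR IHyl IHyr => ?_
  intro z
  induction z with | mk zl zr zL zR IHzl IHzr => ?_
  refine ⟨fun h1 h2 => ?_, fun h1 h2 => ?_, fun h1 h2 => ?_⟩
  · refine p_le_iff.2 ⟨fun i h => ?_, fun k h => ?_⟩
    · exact (p_le_iff.1 h1).1 i ((IHxl i _ _).2.1 h2 h)
    · exact (p_le_iff.1 h2).2 k ((IHzr k).2.2 h h1)
  · refine p_le_iff.2 ⟨fun j h => ?_, fun i h => ?_⟩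
    · exact (p_le_iff.1 h1).1 j ((IHyl j _).2.2 h2 h)
    · exact (p_le_iff.1 h2).2 i ((IHxr i _ _).1 h h1)
  · refine p_le_iff.2 ⟨fun k h => ?_, fun j h => ?_⟩
    · exact (p_le_iff.1 h1).1 k ((IHzl k).1 h2 h)
    · exact (p_le_iff.1 h2).2 j ((IHyr j _).2.1 h h1)

theorem p_le_trans {x y z : PGame.{u}} (h1 : x ≤ y) (h2 : y ≤ z) : x ≤ z :=
  (le_trans_aux x y z).1 h1 h2

theorem p_eqv_refl (x : PGame.{u}) : x ≈ x := ⟨p_le_refl x, p_le_refl x⟩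

theorem p_eqv_symm {x y : PGame.{u}} (h : x ≈ y) : y ≈ x := ⟨h.2, h.1⟩

theorem p_eqv_trans {x y z : PGame.{u}} (h1 : x ≈ y) (h2 : y ≈ z) : x ≈ z :=
  ⟨p_le_trans h1.1 h2.1, p_le_trans h2.2 h1.2⟩

theorem p_lf_of_le_mL {x y : PGame.{u}} {i : LM y} (h : x ≤ mL y i) : ¬ y ≤ x :=
  fun h' => p_not_le_mL y i (p_le_trans h' h)

theorem p_lf_of_mR_le {x y : PGame.{u}} {j : RM x} (h : mR x j ≤ y) : ¬ y ≤ x :=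
  fun h' => p_not_mR_le x j (p_le_trans h h')

theorem p_lf_iff {x y : PGame.{u}} :
    ¬ y ≤ x ↔ (∃ i, x ≤ mL y i) ∨ (∃ j, mR x j ≤ y) := by
  rw [p_le_iff]
  simp only [not_and_or, not_forall, not_not]

theorem p_equiv_of_exists {x y : PGame.{u}}
    (hl1 : ∀ i, ∃ j, mL x i ≈ mL y j) (hl2 : ∀ j, ∃ i, mL x i ≈ mL y j)
    (hr1 : ∀ i, ∃ j, mR x i ≈ mR y j) (hr2 : ∀ j, ∃ i, mR x i ≈ mR y j) : x ≈ y := by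
  refine ⟨p_le_iff.2 ⟨fun i h => ?_, fun j h => ?_⟩, p_le_iff.2 ⟨fun j h => ?_, fun i h => ?_⟩⟩
  · obtain ⟨j, hj⟩ := hl1 i; exact p_not_le_mL y j (p_le_trans h hj.1)
  · obtain ⟨i, hi⟩ := hr2 j; exact p_not_mR_le x i (p_le_trans hi.1 h)
  · obtain ⟨i, hi⟩ := hl2 j; exact p_not_le_mL x i (p_le_trans h hi.2)
  · obtain ⟨j, hj⟩ := hr1 i; exact p_not_mR_le y j (p_le_trans hj.2 h)

/-! negation -/

theorem p_neg_le_aux : ∀ x y : PGame.{u}, (-x ≤ -y ↔ y ≤ x) ∧ (-y ≤ -x ↔ x ≤ y) := by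
  intro x
  induction x with | mk xl xr xL xR IHxl IHxr => ?_
  intro y
  induction y with | mk yl yr yL yR IHyl IHyr => ?_
  constructor
  · exact p_le_iff.trans (and_comm.trans ((and_congr
      (forall_congr' fun j => not_congr (IHyl j).2)
      (forall_congr' fun i => not_congr (IHxr i _).2)).trans p_le_mk.symm))
  · exact p_le_iff.trans (and_comm.trans ((and_congr
      (forall_congr' fun i => not_congr (IHxl i _).1)
      (forall_congr' fun j => not_congr (IHyr j).1)).trans p_le_mk.symm))

theorem p_neg_le_neg {x y : PGame.{u}} : -x ≤ -y ↔ y ≤ x := (p_neg_le_aux x y).1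

theorem p_neg_congr {a b : PGame.{u}} (h : a ≈ b) : -a ≈ -b :=
  ⟨p_neg_le_neg.2 h.2, p_neg_le_neg.2 h.1⟩

/-! addition -/

theorem lf_add_mR_right {a b c : PGame.{u}} (j : RM b) (h : a + mR b j ≤ c) : ¬ c ≤ a + b := by
  cases a; cases b; exact p_lf_of_mR_le (j := Sum.inr j) h

theorem lf_add_mR_left {a b c : PGame.{u}} (i : RM a) (h : mR a i + b ≤ c) : ¬ c ≤ a + b := by
  cases a; cases b; exact p_lf_of_mR_le (j := Sum.inl i) h

theorem lf_add_mL_right {a b c : PGame.{u}} (j : LM b) (h : c ≤ a + mL b j) : ¬ a + b ≤ c := by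
  cases a; cases b; exact p_lf_of_le_mL (i := Sum.inr j) h

theorem lf_add_mL_left {a b c : PGame.{u}} (i : LM a) (h : c ≤ mL a i + b) : ¬ a + b ≤ c := by
  cases a; cases b; exact p_lf_of_le_mL (i := Sum.inl i) h

theorem add_mono_aux : ∀ x y z : PGame.{u},
    (x ≤ y → x + z ≤ y + z) ∧ (¬ y ≤ x → ¬ y + z ≤ x + z) ∧
      (y ≤ x → y + z ≤ x + z) ∧ (¬ x ≤ y → ¬ x + z ≤ y + z) := by
  intro x
  induction x with | mk xl xr xL xR IHxl IHxr => ?_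
  intro y
  induction y with | mk yl yr yL yR IHyl IHyr => ?_
  intro z
  induction z with | mk zl zr zL zR IHzl IHzr => ?_
  refine ⟨fun h => ?_, fun h => ?_, fun h => ?_, fun h => ?_⟩
  · rw [p_le_iff]
    constructor
    · rintro (i | k)
      · exact (IHxl i _ _).2.1 ((p_le_iff.1 h).1 i)
      · exact fun h' => p_not_le_mL (mk yl yr yL yR + mk zl zr zL zR) (Sum.inr k)
          (p_le_trans h' ((IHzl k).1 h))
    · rintro (j | k)
      · exact (IHyr j _).2.1 ((p_le_iff.1 h).2 j)
      · exact fun h' => p_not_mR_le (mk xl xr xL xR + mk zl zr zL zR) (Sum.inr k)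
          (p_le_trans ((IHzr k).1 h) h')
  · rcases p_lf_iff.1 h with ⟨i, hi⟩ | ⟨j, hj⟩
    · exact lf_add_mL_left i ((IHyl i _).1 hi)
    · exact lf_add_mR_left j ((IHxr j _ _).1 hj)
  · rw [p_le_iff]
    constructor
    · rintro (j | k)
      · exact (IHyl j _).2.2.2 ((p_le_iff.1 h).1 j)
      · exact fun h' => p_not_le_mL (mk xl xr xL xR + mk zl zr zL zR) (Sum.inr k)
          (p_le_trans h' ((IHzl k).2.2.1 h))
    · rintro (i | k)
      · exact (IHxr i _ _).2.2.2 ((p_le_iff.1 h).2 i)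
      · exact fun h' => p_not_mR_le (mk yl yr yL yR + mk zl zr zL zR) (Sum.inr k)
          (p_le_trans ((IHzr k).2.2.1 h) h')
  · rcases p_lf_iff.1 h with ⟨i, hi⟩ | ⟨j, hj⟩
    · exact lf_add_mL_left i ((IHxl i _ _).2.2.1 hi)
    · exact lf_add_mR_left j ((IHyr j _).2.2.1 hj)

theorem p_add_le_add_right {x y : PGame.{u}} (h : x ≤ y) (z : PGame.{u}) : x + z ≤ y + z :=
  (add_mono_aux x y z).1 h

theorem add_comm_equiv : ∀ x y : PGame.{u}, x + y ≈ y + x := by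
  intro x
  induction x with | mk xl xr xL xR IHxl IHxr => ?_
  intro y
  induction y with | mk yl yr yL yR IHyl IHyr => ?_
  refine p_equiv_of_exists ?_ ?_ ?_ ?_
  · rintro (i | j)
    · exact ⟨Sum.inr i, IHxl i _⟩
    · exact ⟨Sum.inl j, IHyl j⟩
  · rintro (j | i)
    · exact ⟨Sum.inr j, IHyl j⟩
    · exact ⟨Sum.inl i, IHxl i _⟩
  · rintro (i | j)
    · exact ⟨Sum.inr i, IHxr i _⟩
    · exact ⟨Sum.inl j, IHyr j⟩
  · rintro (j | i)
    · exact ⟨Sum.inr j, IHyr j⟩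
    · exact ⟨Sum.inl i, IHxr i _⟩

theorem add_assoc_equiv : ∀ x y z : PGame.{u}, x + y + z ≈ x + (y + z) := by
  intro x
  induction x with | mk xl xr xL xR IHxl IHxr => ?_
  intro y
  induction y with | mk yl yr yL yR IHyl IHyr => ?_
  intro z
  induction z with | mk zl zr zL zR IHzl IHzr => ?_
  refine p_equiv_of_exists ?_ ?_ ?_ ?_
  · rintro ((i | j) | k)
    · exact ⟨Sum.inl i, IHxl i _ _⟩
    · exact ⟨Sum.inr (Sum.inl j), IHyl j _⟩
    · exact ⟨Sum.inr (Sum.inr k), IHzl k⟩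
  · rintro (i | j | k)
    · exact ⟨Sum.inl (Sum.inl i), IHxl i _ _⟩
    · exact ⟨Sum.inl (Sum.inr j), IHyl j _⟩
    · exact ⟨Sum.inr k, IHzl k⟩
  · rintro ((i | j) | k)
    · exact ⟨Sum.inl i, IHxr i _ _⟩
    · exact ⟨Sum.inr (Sum.inl j), IHyr j _⟩
    · exact ⟨Sum.inr (Sum.inr k), IHzr k⟩
  · rintro (i | j | k)
    · exact ⟨Sum.inl (Sum.inl i), IHxr i _ _⟩
    · exact ⟨Sum.inl (Sum.inr j), IHyr j _⟩
    · exact ⟨Sum.inr k, IHzr k⟩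

def pz : PGame.{u} := mk PEmpty.{u+1} PEmpty.{u+1} PEmpty.elim PEmpty.elim

theorem add_zero_equiv : ∀ x : PGame.{u}, x + pz ≈ x := by
  intro x
  induction x with | mk xl xr xL xR IHl IHr => ?_
  refine p_equiv_of_exists ?_ ?_ ?_ ?_
  · rintro (i | e)
    · exact ⟨i, IHl i⟩
    · exact PEmpty.elim e
  · intro i; exact ⟨Sum.inl i, IHl i⟩
  · rintro (j | e)
    · exact ⟨j, IHr j⟩
    · exact PEmpty.elim e
  · intro j; exact ⟨Sum.inl j, IHr j⟩

theorem add_neg_equiv : ∀ x : PGame.{u}, x + -x ≈ pz := by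
  intro x
  induction x with | mk xl xr xL xR IHxl IHxr => ?_
  constructor
  · rw [p_le_iff]
    constructor
    · rintro (i | j)
      · exact lf_add_mR_right (a := xL i) (b := -mk xl xr xL xR) i (IHxl i).1
      · exact lf_add_mR_left (a := mk xl xr xL xR) (b := -(xR j)) j (IHxr j).1
    · intro j; exact PEmpty.elim j
  · rw [p_le_iff]
    constructor
    · intro i; exact PEmpty.elim i
    · rintro (j | i)
      · exact lf_add_mL_right (a := xR j) (b := -mk xl xr xL xR) j (IHxr j).2
      · exact lf_add_mL_left (a := mk xl xr xL xR) (b := -(xL i)) i (IHxl i).2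

theorem p_add_congr {a b c d : PGame.{u}} (h1 : a ≈ b) (h2 : c ≈ d) : a + c ≈ b + d :=
  p_eqv_trans ⟨p_add_le_add_right h1.1 c, p_add_le_add_right h1.2 c⟩
    (p_eqv_trans (add_comm_equiv b c)
      (p_eqv_trans ⟨p_add_le_add_right h2.1 b, p_add_le_add_right h2.2 b⟩ (add_comm_equiv d b)))

/-! the quotient group -/

def pSetoid : Setoid PGame.{u} := ⟨fun x y => x ≈ y, ⟨p_eqv_refl, p_eqv_symm, p_eqv_trans⟩⟩

def G : Type (u + 1) := Quotient pSetoid.{u}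

def g (x : PGame.{u}) : G.{u} := Quotient.mk pSetoid x

instance : Zero G.{u} := ⟨g pz⟩

instance : Neg G.{u} :=
  ⟨fun a => Quotient.liftOn a (fun x => g (-x)) (fun _ _ h => Quotient.sound (p_neg_congr h))⟩

instance : Add G.{u} :=
  ⟨fun a b => Quotient.liftOn₂ a b (fun x y => g (x + y))
    (fun _ _ _ _ h1 h2 => Quotient.sound (p_add_congr h1 h2))⟩

instance : LE G.{u} :=
  ⟨fun a b => Quotient.liftOn₂ a b (fun x y => x ≤ y)
    (fun _ _ _ _ h1 h2 => propext ⟨fun h => p_le_trans (p_le_trans h1.2 h) h2.1,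
      fun h => p_le_trans (p_le_trans h1.1 h) h2.2⟩)⟩

instance : PartialOrder G.{u} where
  lt a b := a ≤ b ∧ ¬ b ≤ a
  lt_iff_le_not_ge _ _ := Iff.rfl
  le_refl a := Quotient.inductionOn a fun x => p_le_refl x
  le_trans a b c := Quotient.inductionOn₃ a b c fun x y z => @p_le_trans x y z
  le_antisymm a b := Quotient.inductionOn₂ a b fun _ _ h1 h2 => Quotient.sound ⟨h1, h2⟩

instance : AddCommGroup G.{u} where
  add_assoc a b c := Quotient.inductionOn₃ a b c fun x y z => Quotient.sound (add_assoc_equiv x y z)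
  zero_add a := Quotient.inductionOn a fun x =>
    Quotient.sound (p_eqv_trans (add_comm_equiv pz x) (add_zero_equiv x))
  add_zero a := Quotient.inductionOn a fun x => Quotient.sound (add_zero_equiv x)
  neg_add_cancel a := Quotient.inductionOn a fun x =>
    Quotient.sound (p_eqv_trans (add_comm_equiv (-x) x) (add_neg_equiv x))
  add_comm a b := Quotient.inductionOn₂ a b fun x y => Quotient.sound (add_comm_equiv x y)
  nsmul := nsmulRec
  zsmul := zsmulRec

instance : IsOrderedAddMonoid G.{u} where
  add_le_add_left a b := Quotient.inductionOn₂ a b fun x y h c =>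
    Quotient.inductionOn c fun z => @p_add_le_add_right x y h z

theorem g_eq_iff {a b : PGame.{u}} : g a = g b ↔ a ≈ b :=
  ⟨fun h => Quotient.exact h, fun h => Quotient.sound h⟩

theorem lt_iff_g {a b : PGame.{u}} : a < b ↔ g a < g b := Iff.rfl

theorem le_iff_g {a b : PGame.{u}} : a ≤ b ↔ g a ≤ g b := Iff.rfl

theorem lt_of_lt_of_eq_sub {A B C D : G.{u}} (h : C < D) (e : A - B = C - D) : A < B := by
  rw [← sub_neg] at h ⊢
  rw [e]
  exact h

theorem lt_of_add_lt {A B C1 D1 C2 D2 : G.{u}} (h1 : C1 < D1) (h2 : C2 < D2)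
    (e : A - B = (C1 + C2) - (D1 + D2)) : A < B :=
  lt_of_lt_of_eq_sub (add_lt_add h1 h2) e


/-! numeric games -/

theorem numeric_iff (x : PGame.{u}) : Numeric x ↔
    (∀ i j, mL x i < mR x j) ∧ (∀ i, Numeric (mL x i)) ∧ ∀ j, Numeric (mR x j) := by
  cases x; exact Iff.rfl

theorem num_mL {x : PGame.{u}} (h : Numeric x) (i : LM x) : Numeric (mL x i) :=
  ((numeric_iff _).1 h).2.1 i

theorem num_mR {x : PGame.{u}} (h : Numeric x) (j : RM x) : Numeric (mR x j) :=
  ((numeric_iff _).1 h).2.2 j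

theorem num_LR {x : PGame.{u}} (h : Numeric x) (i : LM x) (j : RM x) : mL x i < mR x j :=
  ((numeric_iff _).1 h).1 i j

theorem num_le_of_lf : ∀ {x y : PGame.{u}}, Numeric x → Numeric y → ¬ y ≤ x → x ≤ y := by
  intro x
  induction x with | mk xl xr xL xR IHxl IHxr => ?_
  intro y ox oy h
  by_contra h2
  cases y with | mk yl yr yL yR => ?_
  rcases p_lf_iff.1 h with ⟨i, h1⟩ | ⟨j, h1⟩ <;> rcases p_lf_iff.1 h2 with ⟨i', h3⟩ | ⟨j', h3⟩
  · have a1 : ¬ mL (mk yl yr yL yR) i ≤ mL (mk xl xr xL xR) i' :=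
      fun h4 => p_not_le_mL _ i' (p_le_trans h1 h4)
    have a2 : ¬ mL (mk xl xr xL xR) i' ≤ mL (mk yl yr yL yR) i :=
      fun h4 => p_not_le_mL _ i (p_le_trans h3 h4)
    exact a2 (IHxl i' (num_mL ox i') (num_mL oy i) a1)
  · exact (num_LR oy i j').2 (p_le_trans h3 h1)
  · exact (num_LR ox i' j).2 (p_le_trans h1 h3)
  · have a1 : ¬ mR (mk yl yr yL yR) j' ≤ mR (mk xl xr xL xR) j :=
      fun h4 => p_not_mR_le _ j' (p_le_trans h4 h1)
    have a2 : ¬ mR (mk xl xr xL xR) j ≤ mR (mk yl yr yL yR) j' :=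
      fun h4 => p_not_mR_le _ j (p_le_trans h4 h3)
    exact a2 (IHxr j (num_mR ox j) (num_mR oy j') a1)

theorem num_lt_of_lf {a b : PGame.{u}} (ha : Numeric a) (hb : Numeric b) (h : ¬ b ≤ a) : a < b :=
  ⟨num_le_of_lf ha hb h, h⟩

theorem num_mL_lt {x : PGame.{u}} (h : Numeric x) (i : LM x) : mL x i < x :=
  num_lt_of_lf (num_mL h i) h (p_not_le_mL x i)

theorem num_lt_mR {x : PGame.{u}} (h : Numeric x) (j : RM x) : x < mR x j :=
  num_lt_of_lf h (num_mR h j) (p_not_mR_le x j)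

theorem num_trich {a b : PGame.{u}} (ha : Numeric a) (hb : Numeric b) :
    a < b ∨ a ≈ b ∨ b < a := by
  by_cases h1 : a ≤ b
  · by_cases h2 : b ≤ a
    · exact Or.inr (Or.inl ⟨h1, h2⟩)
    · exact Or.inl ⟨h1, h2⟩
  · exact Or.inr (Or.inr ⟨num_le_of_lf hb ha h1, h1⟩)

theorem numeric_add_aux : ∀ x y : PGame.{u}, Numeric x → Numeric y → Numeric (x + y) := by
  intro x
  induction x with | mk xl xr xL xR IHxl IHxr => ?_
  intro y
  induction y with | mk yl yr yL yR IHyl IHyr => ?_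
  intro hx hy
  refine (numeric_iff _).2 ⟨?_, ?_, ?_⟩
  · rintro (i | k) (j | l)
    · exact lt_iff_g.2 (add_lt_add_of_lt_of_le (lt_iff_g.1 (num_LR hx i j)) (le_refl (g (mk yl yr yL yR))))
    · exact lt_iff_g.2 (add_lt_add (lt_iff_g.1 (num_mL_lt hx i)) (lt_iff_g.1 (num_lt_mR hy l)))
    · exact lt_iff_g.2 (add_lt_add (lt_iff_g.1 (num_lt_mR hx j)) (lt_iff_g.1 (num_mL_lt hy k)))
    · exact lt_iff_g.2 (add_lt_add_of_le_of_lt (le_refl (g (mk xl xr xL xR))) (lt_iff_g.1 (num_LR hy k l)))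
  · rintro (i | k)
    · exact IHxl i _ (num_mL hx i) hy
    · exact IHyl k hx (num_mL hy k)
  · rintro (j | l)
    · exact IHxr j _ (num_mR hx j) hy
    · exact IHyr l hx (num_mR hy l)

theorem numeric_neg_aux : ∀ x : PGame.{u}, Numeric x → Numeric (-x) := by
  intro x
  induction x with | mk xl xr xL xR IHxl IHxr => ?_
  intro hx
  refine (numeric_iff _).2 ⟨?_, ?_, ?_⟩
  · intro i j
    exact lt_iff_g.2 (neg_lt_neg (lt_iff_g.1 (num_LR hx j i)))
  · intro i; exact IHxr i (num_mR hx i)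
  · intro j; exact IHxl j (num_mL hx j)

theorem numeric_add {a b : PGame.{u}} (ha : Numeric a) (hb : Numeric b) : Numeric (a + b) :=
  numeric_add_aux a b ha hb

theorem numeric_sub {a b : PGame.{u}} (ha : Numeric a) (hb : Numeric b) : Numeric (a - b) :=
  numeric_add_aux a (-b) ha (numeric_neg_aux b hb)

/-! multiplication -/

abbrev M (a b : PGame.{u}) : G.{u} := g (a * b)

section
variable {xl xr : Type u} {xL : xl → PGame.{u}} {xR : xr → PGame.{u}}
  {yl yr : Type u} {yL : yl → PGame.{u}} {yR : yr → PGame.{u}}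

theorem gLL (i : xl) (k : yl) : g (mL (mk xl xr xL xR * mk yl yr yL yR) (Sum.inl (i, k))) =
    M (xL i) (mk yl yr yL yR) + M (mk xl xr xL xR) (yL k) - M (xL i) (yL k) := rfl

theorem gRR (j : xr) (l : yr) : g (mL (mk xl xr xL xR * mk yl yr yL yR) (Sum.inr (j, l))) =
    M (xR j) (mk yl yr yL yR) + M (mk xl xr xL xR) (yR l) - M (xR j) (yR l) := rfl

theorem gLR (i : xl) (l : yr) : g (mR (mk xl xr xL xR * mk yl yr yL yR) (Sum.inl (i, l))) =
    M (xL i) (mk yl yr yL yR) + M (mk xl xr xL xR) (yR l) - M (xL i) (yR l) := rfl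

theorem gRL (j : xr) (k : yl) : g (mR (mk xl xr xL xR * mk yl yr yL yR) (Sum.inr (j, k))) =
    M (xR j) (mk yl yr yL yR) + M (mk xl xr xL xR) (yL k) - M (xR j) (yL k) := rfl

end

theorem mul_comm_g : ∀ x y : PGame.{u}, M x y = M y x := by
  intro x
  induction x with | mk xl xr xL xR IHxl IHxr => ?_
  intro y
  induction y with | mk yl yr yL yR IHyl IHyr => ?_
  refine g_eq_iff.2 (p_equiv_of_exists ?_ ?_ ?_ ?_)
  · rintro (⟨i, k⟩ | ⟨j, l⟩)
    · refine ⟨Sum.inl (k, i), g_eq_iff.1 ?_⟩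
      rw [gLL, gLL, IHxl i (yL k), IHxl i, IHyl k]; abel
    · refine ⟨Sum.inr (l, j), g_eq_iff.1 ?_⟩
      rw [gRR, gRR, IHxr j (yR l), IHxr j, IHyr l]; abel
  · rintro (⟨k, i⟩ | ⟨l, j⟩)
    · refine ⟨Sum.inl (i, k), g_eq_iff.1 ?_⟩
      rw [gLL, gLL, IHxl i (yL k), IHxl i, IHyl k]; abel
    · refine ⟨Sum.inr (j, l), g_eq_iff.1 ?_⟩
      rw [gRR, gRR, IHxr j (yR l), IHxr j, IHyr l]; abel
  · rintro (⟨i, l⟩ | ⟨j, k⟩)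
    · refine ⟨Sum.inr (l, i), g_eq_iff.1 ?_⟩
      rw [gLR, gRL, IHxl i (yR l), IHxl i, IHyr l]; abel
    · refine ⟨Sum.inl (k, j), g_eq_iff.1 ?_⟩
      rw [gRL, gLR, IHxr j (yL k), IHxr j, IHyl k]; abel
  · rintro (⟨k, j⟩ | ⟨l, i⟩)
    · refine ⟨Sum.inr (j, k), g_eq_iff.1 ?_⟩
      rw [gRL, gLR, IHxr j (yL k), IHxr j, IHyl k]; abel
    · refine ⟨Sum.inl (i, l), g_eq_iff.1 ?_⟩
      rw [gLR, gRL, IHxl i (yR l), IHxl i, IHyr l]; abel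

theorem mulLL_lt {x y : PGame.{u}} (h : Numeric (x * y)) (i : LM x) (k : LM y) :
    M (mL x i) y + M x (mL y k) - M (mL x i) (mL y k) < M x y := by
  cases x; cases y; exact lt_iff_g.1 (num_mL_lt h (Sum.inl (i, k)))

theorem mulRR_lt {x y : PGame.{u}} (h : Numeric (x * y)) (j : RM x) (l : RM y) :
    M (mR x j) y + M x (mR y l) - M (mR x j) (mR y l) < M x y := by
  cases x; cases y; exact lt_iff_g.1 (num_mL_lt h (Sum.inr (j, l)))

theorem mulLR_gt {x y : PGame.{u}} (h : Numeric (x * y)) (i : LM x) (l : RM y) :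
    M x y < M (mL x i) y + M x (mR y l) - M (mL x i) (mR y l) := by
  cases x; cases y; exact lt_iff_g.1 (num_lt_mR h (Sum.inl (i, l)))

theorem mulRL_gt {x y : PGame.{u}} (h : Numeric (x * y)) (j : RM x) (k : LM y) :
    M x y < M (mR x j) y + M x (mL y k) - M (mR x j) (mL y k) := by
  cases x; cases y; exact lt_iff_g.1 (num_lt_mR h (Sum.inr (j, k)))

theorem mul_le_mul_crit {x₁ y₁ x₂ y₂ : PGame.{u}}
    (hLL : ∀ i k, M (mL x₁ i) y₁ + M x₁ (mL y₁ k) - M (mL x₁ i) (mL y₁ k) < M x₂ y₂)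
    (hRR : ∀ j l, M (mR x₁ j) y₁ + M x₁ (mR y₁ l) - M (mR x₁ j) (mR y₁ l) < M x₂ y₂)
    (hLR : ∀ i l, M x₁ y₁ < M (mL x₂ i) y₂ + M x₂ (mR y₂ l) - M (mL x₂ i) (mR y₂ l))
    (hRL : ∀ j k, M x₁ y₁ < M (mR x₂ j) y₂ + M x₂ (mL y₂ k) - M (mR x₂ j) (mL y₂ k)) :
    M x₁ y₁ ≤ M x₂ y₂ := by
  cases x₁; cases y₁; cases x₂; cases y₂
  refine le_iff_g.1 (p_le_iff.2 ⟨?_, ?_⟩)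
  · rintro (⟨i, k⟩ | ⟨j, l⟩)
    · exact (lt_iff_g.2 (hLL i k)).2
    · exact (lt_iff_g.2 (hRR j l)).2
  · rintro (⟨i, l⟩ | ⟨j, k⟩)
    · exact (lt_iff_g.2 (hLR i l)).2
    · exact (lt_iff_g.2 (hRL j k)).2

theorem numeric_mul_crit {x y : PGame.{u}}
    (nLL : ∀ i k, Numeric (mL x i * y + x * mL y k - mL x i * mL y k))
    (nRR : ∀ j l, Numeric (mR x j * y + x * mR y l - mR x j * mR y l))
    (nLR : ∀ i l, Numeric (mL x i * y + x * mR y l - mL x i * mR y l))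
    (nRL : ∀ j k, Numeric (mR x j * y + x * mL y k - mR x j * mL y k))
    (ha : ∀ i i' k l, M (mL x i) y + M x (mL y k) - M (mL x i) (mL y k) <
      M (mL x i') y + M x (mR y l) - M (mL x i') (mR y l))
    (hb : ∀ i j k k', M (mL x i) y + M x (mL y k) - M (mL x i) (mL y k) <
      M (mR x j) y + M x (mL y k') - M (mR x j) (mL y k'))
    (hc : ∀ j i l l', M (mR x j) y + M x (mR y l) - M (mR x j) (mR y l) <
      M (mL x i) y + M x (mR y l') - M (mL x i) (mR y l'))
    (hd : ∀ j j' l k, M (mR x j) y + M x (mR y l) - M (mR x j) (mR y l) <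
      M (mR x j') y + M x (mL y k) - M (mR x j') (mL y k)) :
    Numeric (x * y) := by
  cases x; cases y
  refine (numeric_iff _).2 ⟨?_, ?_, ?_⟩
  · rintro (⟨i, k⟩ | ⟨j, l⟩) (⟨i', l'⟩ | ⟨j', k'⟩)
    · exact lt_iff_g.2 (ha i i' k l')
    · exact lt_iff_g.2 (hb i j' k k')
    · exact lt_iff_g.2 (hc j i' l l')
    · exact lt_iff_g.2 (hd j j' l k')
  · rintro (⟨i, k⟩ | ⟨j, l⟩)
    · exact nLL i k
    · exact nRR j l
  · rintro (⟨i, l⟩ | ⟨j, k⟩)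
    · exact nLR i l
    · exact nRL j k

/-! the inductive argument -/

def IsOpt (a : PGame.{u}) : PGame.{u} → Prop
  | mk _ _ L R => (∃ i, a = L i) ∨ (∃ j, a = R j)

theorem isOpt_mL (x : PGame.{u}) (i : LM x) : IsOpt (mL x i) x := by
  cases x; exact Or.inl ⟨i, rfl⟩

theorem isOpt_mR (x : PGame.{u}) (j : RM x) : IsOpt (mR x j) x := by
  cases x; exact Or.inr ⟨j, rfl⟩

theorem num_of_opt {a x : PGame.{u}} (hx : Numeric x) (h : IsOpt a x) : Numeric a := by
  cases x
  rcases h with ⟨i, rfl⟩ | ⟨j, rfl⟩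
  · exact num_mL hx i
  · exact num_mR hx j

theorem wf_isOpt : WellFounded IsOpt.{u} := ⟨fun x => by
  induction x with | mk l r L R ihl ihr => ?_
  refine Acc.intro _ (fun a h => ?_)
  rcases h with ⟨i, rfl⟩ | ⟨j, rfl⟩
  exacts [ihl i, ihr j]⟩

abbrev Bp (x₁ x₂ y : PGame.{u}) : Prop := x₁ ≈ x₂ → M x₁ y = M x₂ y

abbrev Cp (x₁ x₂ y : PGame.{u}) : Prop := x₁ < x₂ →
  (∀ k, M x₁ y + M x₂ (mL y k) < M x₁ (mL y k) + M x₂ y) ∧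
    (∀ l, M x₁ (mR y l) + M x₂ y < M x₁ y + M x₂ (mR y l))

theorem caseA {x y a a' c e : PGame.{u}} (ha : Numeric a) (ha' : Numeric a')
    (T1a' : M x c + M a' e < M a' c + M x e) (T1a : M x c + M a e < M a c + M x e)
    (hB : a ≈ a' → M a y = M a' y ∧ M a e = M a' e)
    (hC1 : a < a' → M a y + M a' c < M a c + M a' y)
    (hC2 : a' < a → M a' e + M a y < M a' y + M a e) :
    M a y + M x c - M a c < M a' y + M x e - M a' e := by
  rcases num_trich ha ha' with h | h | h
  · exact lt_of_add_lt (hC1 h) T1a' (by abel)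
  · rw [(hB h).1, ← (hB h).2]; exact lt_of_lt_of_eq_sub T1a (by abel)
  · exact lt_of_add_lt (hC2 h) T1a (by abel)

theorem caseD {x y a a' c e : PGame.{u}} (ha : Numeric a) (ha' : Numeric a')
    (T1a : M a c + M x e < M x c + M a e) (T1a' : M a' c + M x e < M x c + M a' e)
    (hB : a ≈ a' → M a y = M a' y ∧ M a c = M a' c)
    (hC1 : a < a' → M a y + M a' c < M a c + M a' y)
    (hC2 : a' < a → M a' e + M a y < M a' y + M a e) :
    M a y + M x e - M a e < M a' y + M x c - M a' c := by
  rcases num_trich ha ha' with h | h | h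
  · exact lt_of_add_lt (hC1 h) T1a (by abel)
  · rw [(hB h).1, ← (hB h).2]; exact lt_of_lt_of_eq_sub T1a (by abel)
  · exact lt_of_add_lt (hC2 h) T1a' (by abel)

theorem stepA {x y : PGame.{u}} (hx : Numeric x) (hy : Numeric y)
    (hA1 : ∀ a, IsOpt a x → Numeric (a * y)) (hA2 : ∀ b, IsOpt b y → Numeric (x * b))
    (hA3 : ∀ a b, IsOpt a x → IsOpt b y → Numeric (a * b))
    (ihxy : ∀ x₁ x₂ y', IsOpt x₁ x → IsOpt x₂ x → (y' = y ∨ IsOpt y' y) →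
      Bp x₁ x₂ y' ∧ Cp x₁ x₂ y')
    (ihyx : ∀ y₁ y₂ x', IsOpt y₁ y → IsOpt y₂ y → (x' = x ∨ IsOpt x' x) →
      Bp y₁ y₂ x' ∧ Cp y₁ y₂ x') :
    Numeric (x * y) := by
  have cm := mul_comm_g
  have oLx := isOpt_mL x
  have oRx := isOpt_mR x
  have oLy := isOpt_mL y
  have oRy := isOpt_mR y
  refine numeric_mul_crit (fun i k => ?_) (fun j l => ?_) (fun i l => ?_) (fun j k => ?_)
    ?_ ?_ ?_ ?_
  · exact numeric_sub (numeric_add (hA1 _ (oLx i)) (hA2 _ (oLy k))) (hA3 _ _ (oLx i) (oLy k))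
  · exact numeric_sub (numeric_add (hA1 _ (oRx j)) (hA2 _ (oRy l))) (hA3 _ _ (oRx j) (oRy l))
  · exact numeric_sub (numeric_add (hA1 _ (oLx i)) (hA2 _ (oRy l))) (hA3 _ _ (oLx i) (oRy l))
  · exact numeric_sub (numeric_add (hA1 _ (oRx j)) (hA2 _ (oLy k))) (hA3 _ _ (oRx j) (oLy k))
  · intro i i' k l
    have T : ∀ i₀, M x (mL y k) + M (mL x i₀) (mR y l) <
        M (mL x i₀) (mL y k) + M x (mR y l) := by
      intro i₀
      have h := ((ihyx _ _ x (oLy k) (oRy l) (Or.inl rfl)).2 (num_LR hy k l)).1 i₀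
      rw [cm (mL y k) x, cm (mR y l) (mL x i₀), cm (mL y k) (mL x i₀), cm (mR y l) x] at h
      exact h
    exact caseA (num_mL hx i) (num_mL hx i') (T i') (T i)
      (fun h => ⟨(ihxy _ _ y (oLx i) (oLx i') (Or.inl rfl)).1 h,
        (ihxy _ _ _ (oLx i) (oLx i') (Or.inr (oRy l))).1 h⟩)
      (fun h => ((ihxy _ _ y (oLx i) (oLx i') (Or.inl rfl)).2 h).1 k)
      (fun h => ((ihxy _ _ y (oLx i') (oLx i) (Or.inl rfl)).2 h).2 l)
  · intro i j k k'
    have T : ∀ k₀, M y (mL x i) + M (mL y k₀) (mR x j) <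
        M (mL y k₀) (mL x i) + M y (mR x j) := by
      intro k₀
      have h := ((ihxy _ _ y (oLx i) (oRx j) (Or.inl rfl)).2 (num_LR hx i j)).1 k₀
      rw [cm (mL x i) y, cm (mR x j) (mL y k₀), cm (mL x i) (mL y k₀), cm (mR x j) y] at h
      exact h
    have h := caseA (x := y) (y := x) (num_mL hy k) (num_mL hy k') (T k') (T k)
      (fun h => ⟨(ihyx _ _ x (oLy k) (oLy k') (Or.inl rfl)).1 h,
        (ihyx _ _ _ (oLy k) (oLy k') (Or.inr (oRx j))).1 h⟩)
      (fun h => ((ihyx _ _ x (oLy k) (oLy k') (Or.inl rfl)).2 h).1 i)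
      (fun h => ((ihyx _ _ x (oLy k') (oLy k) (Or.inl rfl)).2 h).2 j)
    rw [cm (mL y k) x, cm y (mL x i), cm (mL y k) (mL x i), cm (mL y k') x, cm y (mR x j),
      cm (mL y k') (mR x j)] at h
    exact lt_of_lt_of_eq_sub h (by abel)
  · intro j i l l'
    have T : ∀ l₀, M (mR y l₀) (mL x i) + M y (mR x j) <
        M y (mL x i) + M (mR y l₀) (mR x j) := by
      intro l₀
      have h := ((ihxy _ _ y (oLx i) (oRx j) (Or.inl rfl)).2 (num_LR hx i j)).2 l₀
      rw [cm (mL x i) (mR y l₀), cm (mR x j) y, cm (mL x i) y, cm (mR x j) (mR y l₀)] at h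
      exact h
    have h := caseD (x := y) (y := x) (num_mR hy l) (num_mR hy l') (T l) (T l')
      (fun h => ⟨(ihyx _ _ x (oRy l) (oRy l') (Or.inl rfl)).1 h,
        (ihyx _ _ _ (oRy l) (oRy l') (Or.inr (oLx i))).1 h⟩)
      (fun h => ((ihyx _ _ x (oRy l) (oRy l') (Or.inl rfl)).2 h).1 i)
      (fun h => ((ihyx _ _ x (oRy l') (oRy l) (Or.inl rfl)).2 h).2 j)
    rw [cm (mR y l) x, cm y (mR x j), cm (mR y l) (mR x j), cm (mR y l') x, cm y (mL x i),
      cm (mR y l') (mL x i)] at h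
    exact lt_of_lt_of_eq_sub h (by abel)
  · intro j j' l k
    have T : ∀ j₀, M (mR x j₀) (mL y k) + M x (mR y l) <
        M x (mL y k) + M (mR x j₀) (mR y l) := by
      intro j₀
      have h := ((ihyx _ _ x (oLy k) (oRy l) (Or.inl rfl)).2 (num_LR hy k l)).2 j₀
      rw [cm (mL y k) (mR x j₀), cm (mR y l) x, cm (mL y k) x, cm (mR y l) (mR x j₀)] at h
      exact h
    exact caseD (num_mR hx j) (num_mR hx j') (T j) (T j')
      (fun h => ⟨(ihxy _ _ y (oRx j) (oRx j') (Or.inl rfl)).1 h,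
        (ihxy _ _ _ (oRx j) (oRx j') (Or.inr (oLy k))).1 h⟩)
      (fun h => ((ihxy _ _ y (oRx j) (oRx j') (Or.inl rfl)).2 h).1 k)
      (fun h => ((ihxy _ _ y (oRx j') (oRx j) (Or.inl rfl)).2 h).2 l)

theorem stepB {x₁ x₂ y : PGame.{u}} (hq : x₁ ≈ x₂) (h1 : Numeric x₁) (h2 : Numeric x₂)
    (hBy : ∀ y', IsOpt y' y → M x₁ y' = M x₂ y')
    (hC1 : ∀ i, Cp (mL x₁ i) x₂ y) (hC2 : ∀ j, Cp x₂ (mR x₁ j) y)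
    (hC3 : ∀ i, Cp (mL x₂ i) x₁ y) (hC4 : ∀ j, Cp x₁ (mR x₂ j) y) :
    M x₁ y ≤ M x₂ y := by
  refine mul_le_mul_crit (fun i k => ?_) (fun j l => ?_) (fun i l => ?_) (fun j k => ?_)
  · have hl : mL x₁ i < x₂ :=
      lt_iff_g.2 (lt_of_lt_of_le (lt_iff_g.1 (num_mL_lt h1 i)) (le_iff_g.1 hq.1))
    rw [hBy _ (isOpt_mL y k)]
    exact lt_of_lt_of_eq_sub ((hC1 i hl).1 k) (by abel)
  · have hl : x₂ < mR x₁ j :=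
      lt_iff_g.2 (lt_of_le_of_lt (le_iff_g.1 hq.2) (lt_iff_g.1 (num_lt_mR h1 j)))
    rw [hBy _ (isOpt_mR y l)]
    exact lt_of_lt_of_eq_sub ((hC2 j hl).2 l) (by abel)
  · have hl : mL x₂ i < x₁ :=
      lt_iff_g.2 (lt_of_lt_of_le (lt_iff_g.1 (num_mL_lt h2 i)) (le_iff_g.1 hq.2))
    rw [← hBy _ (isOpt_mR y l)]
    exact lt_of_lt_of_eq_sub ((hC3 i hl).2 l) (by abel)
  · have hl : x₁ < mR x₂ j :=
      lt_iff_g.2 (lt_of_le_of_lt (le_iff_g.1 hq.1) (lt_iff_g.1 (num_lt_mR h2 j)))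
    rw [← hBy _ (isOpt_mL y k)]
    exact lt_of_lt_of_eq_sub ((hC4 j hl).1 k) (by abel)

theorem stepC {x₁ x₂ y : PGame.{u}} (h1 : Numeric x₁) (h2 : Numeric x₂)
    (hA1 : Numeric (x₁ * y)) (hA2 : Numeric (x₂ * y))
    (hBL : ∀ i y', (y' = y ∨ IsOpt y' y) → Bp x₁ (mL x₂ i) y') (hCL : ∀ i, Cp x₁ (mL x₂ i) y)
    (hBR : ∀ j y', (y' = y ∨ IsOpt y' y) → Bp (mR x₁ j) x₂ y') (hCR : ∀ j, Cp (mR x₁ j) x₂ y) :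
    Cp x₁ x₂ y := by
  intro hlt
  rcases p_lf_iff.1 hlt.2 with ⟨i, hi⟩ | ⟨j, hj⟩
  · by_cases hc : mL x₂ i ≤ x₁
    · have he : x₁ ≈ mL x₂ i := ⟨hi, hc⟩
      have e0 := hBL i y (Or.inl rfl) he
      refine ⟨fun k => ?_, fun l => ?_⟩
      · have e1 := hBL i _ (Or.inr (isOpt_mL y k)) he
        rw [e0, e1]
        exact lt_of_lt_of_eq_sub (mulLL_lt hA2 i k) (by abel)
      · have e1 := hBL i _ (Or.inr (isOpt_mR y l)) he
        rw [e0, e1]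
        exact lt_of_lt_of_eq_sub (mulLR_gt hA2 i l) (by abel)
    · have hc' := hCL i ⟨hi, hc⟩
      refine ⟨fun k => ?_, fun l => ?_⟩
      · exact lt_of_add_lt (hc'.1 k) (mulLL_lt hA2 i k) (by abel)
      · exact lt_of_add_lt (hc'.2 l) (mulLR_gt hA2 i l) (by abel)
  · by_cases hc : x₂ ≤ mR x₁ j
    · have he : mR x₁ j ≈ x₂ := ⟨hj, hc⟩
      have e0 := hBR j y (Or.inl rfl) he
      refine ⟨fun k => ?_, fun l => ?_⟩
      · have e1 := hBR j _ (Or.inr (isOpt_mL y k)) he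
        rw [← e0, ← e1]
        exact lt_of_lt_of_eq_sub (mulRL_gt hA1 j k) (by abel)
      · have e1 := hBR j _ (Or.inr (isOpt_mR y l)) he
        rw [← e0, ← e1]
        exact lt_of_lt_of_eq_sub (mulRR_lt hA1 j l) (by abel)
    · have hc' := hCR j ⟨hj, hc⟩
      refine ⟨fun k => ?_, fun l => ?_⟩
      · exact lt_of_add_lt (mulRL_gt hA1 j k) (hc'.1 k) (by abel)
      · exact lt_of_add_lt (mulRR_lt hA1 j l) (hc'.2 l) (by abel)

/-! well-founded induction on multisets of games -/

abbrev RR : Multiset PGame.{u} → Multiset PGame.{u} → Prop :=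
  Relation.TransGen (Relation.CutExpand IsOpt.{u})

theorem R_cons {a' a : PGame.{u}} (h : IsOpt a' a) (t : Multiset PGame.{u}) :
    RR (a' ::ₘ t) (a ::ₘ t) := by
  have := Relation.cutExpand_single_add h t
  rw [Multiset.singleton_add, Multiset.singleton_add] at this
  exact Relation.TransGen.single this

theorem R_drop (a : PGame.{u}) (t : Multiset PGame.{u}) : RR t (a ::ₘ t) :=
  Relation.TransGen.single ⟨0, a, by simp, by rw [add_zero, ← Multiset.singleton_add, add_comm]⟩

theorem R_double {a₁ a₂ a b : PGame.{u}} (h1 : IsOpt a₁ a) (h2 : IsOpt a₂ a) :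
    RR (a₁ ::ₘ a₂ ::ₘ b ::ₘ 0) (a ::ₘ b ::ₘ 0) :=
  Relation.TransGen.single (Relation.cutExpand_double_left h1 h2)

theorem R_2nd {a b' b : PGame.{u}} {c : Multiset PGame.{u}} (h : IsOpt b' b) :
    RR (a ::ₘ b' ::ₘ c) (a ::ₘ b ::ₘ c) := by
  rw [Multiset.cons_swap a b', Multiset.cons_swap a b]; exact R_cons h _

theorem R_3rd {a b c' c : PGame.{u}} (h : IsOpt c' c) :
    RR (a ::ₘ b ::ₘ c' ::ₘ 0) (a ::ₘ b ::ₘ c ::ₘ 0) := by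
  rw [Multiset.cons_swap b c', Multiset.cons_swap a c', Multiset.cons_swap b c,
    Multiset.cons_swap a c]
  exact R_cons h _

theorem R_swap_cons {a b' b : PGame.{u}} {t : Multiset PGame.{u}} (h : IsOpt b' b) :
    RR (a ::ₘ b' ::ₘ t) (b ::ₘ a ::ₘ t) := by
  rw [Multiset.cons_swap a b']; exact R_cons h _

theorem R_cons_swap {a' a b : PGame.{u}} {t : Multiset PGame.{u}} (h : IsOpt a' a) :
    RR (a' ::ₘ b ::ₘ t) (b ::ₘ a ::ₘ t) := by
  rw [Multiset.cons_swap b a]; exact R_cons h _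

theorem R_drop2 {a b : PGame.{u}} {t : Multiset PGame.{u}} : RR (a ::ₘ t) (a ::ₘ b ::ₘ t) := by
  rw [Multiset.cons_swap a b]; exact R_drop b _

theorem R_double_swap {a₁ a₂ a b : PGame.{u}} (h1 : IsOpt a₁ a) (h2 : IsOpt a₂ a) :
    RR (a₁ ::ₘ a₂ ::ₘ b ::ₘ 0) (b ::ₘ a ::ₘ 0) := by
  rw [Multiset.cons_swap b a]; exact R_double h1 h2

inductive Args : Type (u + 1)
  | P1 (x y : PGame.{u}) : Args
  | P24 (x₁ x₂ y : PGame.{u}) : Args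

def Args.ms : Args.{u} → Multiset PGame.{u}
  | .P1 x y => x ::ₘ y ::ₘ 0
  | .P24 x₁ x₂ y => x₁ ::ₘ x₂ ::ₘ y ::ₘ 0

def ArgsRel : Args.{u} → Args.{u} → Prop := InvImage RR Args.ms

theorem argsRel_wf : WellFounded ArgsRel.{u} :=
  InvImage.wf _ (WellFounded.cutExpand wf_isOpt).transGen

theorem AR11 {x y x' y' : PGame.{u}} (h : RR (x' ::ₘ y' ::ₘ 0) (x ::ₘ y ::ₘ 0)) :
    ArgsRel (.P1 x' y') (.P1 x y) := h

theorem AR12 {x y x₁ x₂ y' : PGame.{u}} (h : RR (x₁ ::ₘ x₂ ::ₘ y' ::ₘ 0) (x ::ₘ y ::ₘ 0)) :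
    ArgsRel (.P24 x₁ x₂ y') (.P1 x y) := h

theorem AR21 {x₁ x₂ y x y' : PGame.{u}} (h : RR (x ::ₘ y' ::ₘ 0) (x₁ ::ₘ x₂ ::ₘ y ::ₘ 0)) :
    ArgsRel (.P1 x y') (.P24 x₁ x₂ y) := h

theorem AR22 {x₁ x₂ y x₁' x₂' y' : PGame.{u}}
    (h : RR (x₁' ::ₘ x₂' ::ₘ y' ::ₘ 0) (x₁ ::ₘ x₂ ::ₘ y ::ₘ 0)) :
    ArgsRel (.P24 x₁' x₂' y') (.P24 x₁ x₂ y) := h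

def P124 : Args.{u} → Prop
  | .P1 x y => Numeric x → Numeric y → Numeric (x * y)
  | .P24 x₁ x₂ y => Numeric x₁ → Numeric x₂ → Numeric y → Bp x₁ x₂ y ∧ Cp x₁ x₂ y

theorem main_ind : ∀ a : Args.{u}, P124 a := by
  intro a
  refine argsRel_wf.induction a ?_
  intro a ih
  cases a with
  | P1 x y =>
    show Numeric x → Numeric y → Numeric (x * y)
    intro hx hy
    refine stepA hx hy (fun a ha => ?_) (fun b hb => ?_) (fun a b ha hb => ?_) ?_ ?_
    · exact ih (.P1 a y) (AR11 (R_cons ha _)) (num_of_opt hx ha) hy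
    · exact ih (.P1 x b) (AR11 (R_2nd hb)) hx (num_of_opt hy hb)
    · exact ih (.P1 a b) (AR11 (Relation.TransGen.trans (R_2nd hb) (R_cons ha _)))
        (num_of_opt hx ha) (num_of_opt hy hb)
    · intro x₁ x₂ y' h1 h2 hy'
      rcases hy' with e | hy'
      · rw [e]
        exact ih (.P24 x₁ x₂ y) (AR12 (R_double h1 h2)) (num_of_opt hx h1) (num_of_opt hx h2) hy
      · exact ih (.P24 x₁ x₂ y') (AR12 (Relation.TransGen.trans (R_3rd hy') (R_double h1 h2)))
          (num_of_opt hx h1) (num_of_opt hx h2) (num_of_opt hy hy')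
    · intro y₁ y₂ x' h1 h2 hx'
      rcases hx' with e | hx'
      · rw [e]
        exact ih (.P24 y₁ y₂ x) (AR12 (R_double_swap h1 h2)) (num_of_opt hy h1) (num_of_opt hy h2) hx
      · exact ih (.P24 y₁ y₂ x') (AR12 (Relation.TransGen.trans (R_3rd hx') (R_double_swap h1 h2)))
          (num_of_opt hy h1) (num_of_opt hy h2) (num_of_opt hx hx')
  | P24 x₁ x₂ y =>
    show Numeric x₁ → Numeric x₂ → Numeric y → Bp x₁ x₂ y ∧ Cp x₁ x₂ y
    intro h1 h2 hy
    have hBy : ∀ y', IsOpt y' y → Bp x₁ x₂ y' := fun y' hy' =>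
      (ih (.P24 x₁ x₂ y') (AR22 (R_3rd hy')) h1 h2 (num_of_opt hy hy')).1
    have hC1 : ∀ i, Cp (mL x₁ i) x₂ y := fun i =>
      (ih (.P24 (mL x₁ i) x₂ y) (AR22 (R_cons (isOpt_mL x₁ i) _)) (num_mL h1 i) h2 hy).2
    have hC2 : ∀ j, Cp x₂ (mR x₁ j) y := fun j =>
      (ih (.P24 x₂ (mR x₁ j) y) (AR22 (R_swap_cons (isOpt_mR x₁ j))) h2 (num_mR h1 j) hy).2
    have hC3 : ∀ i, Cp (mL x₂ i) x₁ y := fun i =>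
      (ih (.P24 (mL x₂ i) x₁ y) (AR22 (R_cons_swap (isOpt_mL x₂ i))) (num_mL h2 i) h1 hy).2
    have hC4 : ∀ j, Cp x₁ (mR x₂ j) y := fun j =>
      (ih (.P24 x₁ (mR x₂ j) y) (AR22 (R_2nd (isOpt_mR x₂ j))) h1 (num_mR h2 j) hy).2
    refine ⟨fun hq => le_antisymm
      (stepB hq h1 h2 (fun y' hy' => hBy y' hy' hq) hC1 hC2 hC3 hC4)
      (stepB (p_eqv_symm hq) h2 h1 (fun y' hy' => (hBy y' hy' hq).symm) hC3 hC4 hC1 hC2), ?_⟩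
    refine stepC h1 h2 (ih (.P1 x₁ y) (AR21 R_drop2) h1 hy) (ih (.P1 x₂ y) (AR21 (R_drop _ _)) h2 hy)
      ?_ ?_ ?_ ?_
    · intro i y' hy'
      rcases hy' with e | hy'
      · rw [e]
        exact (ih (.P24 x₁ (mL x₂ i) y) (AR22 (R_2nd (isOpt_mL x₂ i))) h1 (num_mL h2 i) hy).1
      · exact (ih (.P24 x₁ (mL x₂ i) y') (AR22 (Relation.TransGen.trans (R_3rd hy')
          (R_2nd (isOpt_mL x₂ i)))) h1 (num_mL h2 i) (num_of_opt hy hy')).1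
    · intro i
      exact (ih (.P24 x₁ (mL x₂ i) y) (AR22 (R_2nd (isOpt_mL x₂ i))) h1 (num_mL h2 i) hy).2
    · intro j y' hy'
      rcases hy' with e | hy'
      · rw [e]
        exact (ih (.P24 (mR x₁ j) x₂ y) (AR22 (R_cons (isOpt_mR x₁ j) _)) (num_mR h1 j) h2 hy).1
      · exact (ih (.P24 (mR x₁ j) x₂ y') (AR22 (Relation.TransGen.trans (R_3rd hy')
          (R_cons (isOpt_mR x₁ j) _))) (num_mR h1 j) h2 (num_of_opt hy hy')).1
    · intro j
      exact (ih (.P24 (mR x₁ j) x₂ y) (AR22 (R_cons (isOpt_mR x₁ j) _)) (num_mR h1 j) h2 hy).2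

end

end PGX

/-- (1) The Conway product of two numbers is a number.
    (2) If `x₁ ≈ x₂` are numbers and `y` is a number, then `x₁ * y ≈ x₂ * y`. -/
theorem numeric_mul_and_congr (x y x₁ x₂ : PGame)
    (hx : x.Numeric) (hy : y.Numeric) (hx₁ : x₁.Numeric) (hx₂ : x₂.Numeric)
    (h : x₁ ≈ x₂) :
    (x * y).Numeric ∧ (x₁ * y ≈ x₂ * y) := by
  exact ⟨PGX.main_ind (PGX.Args.P1 x y) hx hy,
    PGX.g_eq_iff.1 ((PGX.main_ind (PGX.Args.P24 x₁ x₂ y) hx₁ hx₂ hy).1 h)⟩
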